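/- There exists a constant C > 0 such that for all N ≥ 2, setting K = ⌈N · log N⌉ (natural logarithm), the lazy hypercube walk satisfies, for every starting position p ∈ {0,1}^N: TV(μ_K(p), U) ≤ C/N, where U is the uniform distribution on {0,1}^N. -/

import Mathlib

open scoped ENNReal

/-- Total variation distance between two distributions: `(1/2) Σ_x |μ(x) − ν(x)|`. -/
noncomputable def tvDist {X : Type*} (μ ν : PMF X) : ℝ≥0∞ :=
  (1 / 2) * ∑' x, max (μ x - ν x) (ν x - μ x)

/-- One step of the lazy hypercube walk on `{0,1}^N`: sample `i` uniformly from `{0,…,N}`;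
if `i = 0` stay put, otherwise flip coordinate `i`. -/
noncomputable def hcStep (N : ℕ) (p : Fin N → Bool) : PMF (Fin N → Bool) :=
  (PMF.uniformOfFintype (Fin (N + 1))).bind fun i =>
    PMF.pure fun j => if (j : ℕ) + 1 = (i : ℕ) then !(p j) else p j

/-- Distribution of the position of the lazy hypercube walk after `K` steps from `p`. -/
noncomputable def hcWalk (N : ℕ) (p : Fin N → Bool) : ℕ → PMF (Fin N → Bool)
  | 0 => PMF.pure p
  | (K + 1) => (hcWalk N p K).bind (hcStep N)

def hcOut (N : ℕ) (i : Fin (N+1)) (x : Fin N → Bool) : Fin N → Bool :=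
  fun j => if (j : ℕ) + 1 = (i : ℕ) then !(x j) else x j

lemma hcOut_invol (N : ℕ) (i : Fin (N+1)) (x : Fin N → Bool) :
    hcOut N i (hcOut N i x) = x := by
  funext j
  by_cases h : (j : ℕ) + 1 = (i : ℕ) <;> simp [hcOut, h]

lemma hcStep_apply (N : ℕ) (y x : Fin N → Bool) :
    hcStep N y x = ∑ i : Fin (N+1), (N+1 : ℝ≥0∞)⁻¹ * (if x = hcOut N i y then 1 else 0) := by
  simp only [hcStep, PMF.bind_apply, PMF.uniformOfFintype_apply, PMF.pure_apply,
    tsum_fintype, Fintype.card_fin, hcOut]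
  push_cast
  congr!

lemma hcWalk_succ_apply (N : ℕ) (p : Fin N → Bool) (K : ℕ) (x : Fin N → Bool) :
    hcWalk N p (K+1) x = (N+1 : ℝ≥0∞)⁻¹ * ∑ i : Fin (N+1), hcWalk N p K (hcOut N i x) := by
  have key : ∀ (i : Fin (N+1)) (y : Fin N → Bool), x = hcOut N i y ↔ y = hcOut N i x := by
    intro i y
    constructor
    · intro h; rw [h, hcOut_invol]
    · intro h; rw [h, hcOut_invol]
  calc hcWalk N p (K+1) x = ∑ y : Fin N → Bool, hcWalk N p K y * hcStep N y x := by
        rw [show hcWalk N p (K+1) = (hcWalk N p K).bind (hcStep N) from rfl,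
          PMF.bind_apply, tsum_fintype]
    _ = ∑ y : Fin N → Bool, ∑ i : Fin (N+1),
          (N+1 : ℝ≥0∞)⁻¹ * (if y = hcOut N i x then hcWalk N p K y else 0) := by
        refine Finset.sum_congr rfl fun y _ => ?_
        rw [hcStep_apply, Finset.mul_sum]
        refine Finset.sum_congr rfl fun i _ => ?_
        by_cases h : y = hcOut N i x
        · have h1 := (key i y).2 h
          rw [if_pos h1, if_pos h, mul_one, mul_comm]
        · have h2 : ¬ x = hcOut N i y := fun hx => h ((key i y).1 hx)
          simp [h, h2]
    _ = ∑ i : Fin (N+1), (N+1 : ℝ≥0∞)⁻¹ *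
          ∑ y : Fin N → Bool, (if y = hcOut N i x then hcWalk N p K y else 0) := by
        rw [Finset.sum_comm]; simp [Finset.mul_sum]
    _ = (N+1 : ℝ≥0∞)⁻¹ * ∑ i : Fin (N+1), hcWalk N p K (hcOut N i x) := by
        rw [Finset.mul_sum]
        refine Finset.sum_congr rfl fun i _ => ?_
        rw [Finset.sum_ite_eq' Finset.univ (hcOut N i x) (hcWalk N p K)]
        simp

noncomputable def hcEps {N : ℕ} (S : Finset (Fin N)) (x : Fin N → Bool) : ℝ :=
  ∏ j ∈ S, (if x j then (-1:ℝ) else 1)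

noncomputable def hcLam (N : ℕ) (S : Finset (Fin N)) : ℝ :=
  ((N:ℝ) + 1 - 2 * S.card) / ((N:ℝ) + 1)

lemma hcEps_mul {N : ℕ} (S : Finset (Fin N)) (p x : Fin N → Bool) :
    hcEps S p * hcEps S x = ∏ j ∈ S, ((if p j then (-1:ℝ) else 1) * (if x j then (-1:ℝ) else 1)) := by
  rw [hcEps, hcEps, ← Finset.prod_mul_distrib]

lemma hcEps_abs {N : ℕ} (S : Finset (Fin N)) (x : Fin N → Bool) : |hcEps S x| = 1 := by
  rw [hcEps, Finset.abs_prod]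
  have h : ∀ j ∈ S, |if x j then (-1:ℝ) else 1| = 1 := fun j _ => by split <;> simp
  rw [Finset.prod_congr rfl h, Finset.prod_const_one]

lemma sum_eps_mul {N : ℕ} (p x : Fin N → Bool) :
    ∑ S : Finset (Fin N), hcEps S p * hcEps S x = if x = p then (2:ℝ)^N else 0 := by
  have h1 : ∑ S : Finset (Fin N), hcEps S p * hcEps S x
      = ∏ j : Fin N, (((if p j then (-1:ℝ) else 1) * (if x j then (-1:ℝ) else 1)) + 1) := by
    rw [Finset.prod_add]
    rw [← Finset.powerset_univ]
    refine Finset.sum_congr rfl fun S _ => ?_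
    rw [hcEps_mul]
    simp
  rw [h1]
  by_cases h : x = p
  · subst h
    rw [if_pos rfl]
    have hh : ∀ j ∈ Finset.univ, (((if x j then (-1:ℝ) else 1) * (if x j then (-1:ℝ) else 1)) + 1) = 2 :=
      fun j _ => by cases hx : x j <;> simp [hx] <;> norm_num
    rw [Finset.prod_congr rfl hh, Finset.prod_const]
    simp
  · rw [if_neg h]
    have : ∃ j, x j ≠ p j := by
      by_contra hc
      push_neg at hc
      exact h (funext hc)
    obtain ⟨j, hj⟩ := this
    refine Finset.prod_eq_zero (Finset.mem_univ j) ?_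
    cases hx : x j <;> cases hp : p j <;> simp_all

lemma hcOut_zero (N : ℕ) (x : Fin N → Bool) : hcOut N 0 x = x := by
  funext j; simp [hcOut]

lemma hcOut_succ_apply (N : ℕ) (j : Fin N) (x : Fin N → Bool) (k : Fin N) :
    (hcOut N j.succ x) k = if k = j then !(x k) else x k := by
  by_cases hk : k = j
  · subst hk; simp [hcOut]
  · have h2 : (k : ℕ) + 1 ≠ ((j.succ : Fin (N+1)) : ℕ) := by
      simp only [Fin.val_succ]
      exact fun hc => hk (Fin.ext (Nat.succ_injective hc))
    simp only [hcOut]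
    rw [if_neg h2, if_neg hk]

lemma hcEps_out_succ (N : ℕ) (S : Finset (Fin N)) (j : Fin N) (x : Fin N → Bool) :
    hcEps S (hcOut N j.succ x) = (if j ∈ S then (-1:ℝ) else 1) * hcEps S x := by
  by_cases hj : j ∈ S
  · rw [if_pos hj, hcEps, hcEps, ← Finset.mul_prod_erase S _ hj,
      ← Finset.mul_prod_erase S (fun k => if x k then (-1:ℝ) else 1) hj]
    have h1 : (if (hcOut N j.succ x) j then (-1:ℝ) else 1) = -(if x j then (-1:ℝ) else 1) := by
      rw [hcOut_succ_apply, if_pos rfl]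
      cases hx : x j <;> simp
    have h2 : ∀ k ∈ S.erase j, (if (hcOut N j.succ x) k then (-1:ℝ) else 1)
        = (if x k then (-1:ℝ) else 1) := by
      intro k hk
      rw [hcOut_succ_apply, if_neg (Finset.ne_of_mem_erase hk)]
    rw [h1, Finset.prod_congr rfl h2]
    ring
  · rw [if_neg hj, one_mul, hcEps, hcEps]
    refine Finset.prod_congr rfl fun k hk => ?_
    have hkj : k ≠ j := fun hc => hj (hc ▸ hk)
    rw [hcOut_succ_apply, if_neg hkj]

lemma sum_eps_out (N : ℕ) (S : Finset (Fin N)) (x : Fin N → Bool) :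
    ∑ i : Fin (N+1), hcEps S (hcOut N i x) = ((N:ℝ) + 1 - 2 * S.card) * hcEps S x := by
  rw [Fin.sum_univ_succ, hcOut_zero]
  rw [Finset.sum_congr rfl (fun j _ => hcEps_out_succ N S j x), ← Finset.sum_mul]
  have hsum : ∑ j : Fin N, (if j ∈ S then (-1:ℝ) else 1) = (N:ℝ) - 2 * S.card := by
    have h : ∀ j ∈ Finset.univ, (if j ∈ S then (-1:ℝ) else 1)
        = 1 - 2 * (if j ∈ S then (1:ℝ) else 0) := fun j _ => by split <;> ring
    rw [Finset.sum_congr rfl h, Finset.sum_sub_distrib, Finset.sum_const, ← Finset.mul_sum,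
      Finset.sum_boole, Finset.filter_univ_mem]
    simp [mul_comm]
  rw [hsum]
  ring

lemma hcWalk_succ_toReal (N : ℕ) (p : Fin N → Bool) (K : ℕ) (x : Fin N → Bool) :
    ((hcWalk N p (K+1)) x).toReal
      = ((N:ℝ)+1)⁻¹ * ∑ i : Fin (N+1), ((hcWalk N p K) (hcOut N i x)).toReal := by
  rw [hcWalk_succ_apply, ENNReal.toReal_mul,
    ENNReal.toReal_sum (fun i _ => PMF.apply_ne_top _ _), ENNReal.toReal_inv]
  have h : ((N : ℝ≥0∞) + 1).toReal = (N:ℝ) + 1 := by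
    rw [ENNReal.toReal_add (by simp) (by simp), ENNReal.toReal_natCast, ENNReal.toReal_one]
  rw [h]

lemma hcWalk_toReal (N : ℕ) (p : Fin N → Bool) (K : ℕ) (x : Fin N → Bool) :
    ((hcWalk N p K) x).toReal
      = ((2:ℝ)^N)⁻¹ * ∑ S : Finset (Fin N), hcEps S p * hcEps S x * (hcLam N S)^K := by
  induction K generalizing x with
  | zero =>
    have h0 : ((hcWalk N p 0) x).toReal = if x = p then 1 else 0 := by
      show ((PMF.pure p) x).toReal = _
      rw [PMF.pure_apply]
      split <;> simp
    rw [h0]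
    simp only [pow_zero, mul_one]
    rw [sum_eps_mul]
    by_cases h : x = p
    · rw [if_pos h, if_pos h, inv_mul_cancel₀ (by positivity)]
    · rw [if_neg h, if_neg h, mul_zero]
  | succ K ih =>
    rw [hcWalk_succ_toReal]
    simp only [ih]
    calc ((N:ℝ)+1)⁻¹ * ∑ i : Fin (N+1), ((2:ℝ)^N)⁻¹ *
            ∑ S : Finset (Fin N), hcEps S p * hcEps S (hcOut N i x) * (hcLam N S)^K
        = ((2:ℝ)^N)⁻¹ * ∑ S : Finset (Fin N), ((N:ℝ)+1)⁻¹ *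
            ∑ i : Fin (N+1), hcEps S p * hcEps S (hcOut N i x) * (hcLam N S)^K := by
          rw [← Finset.mul_sum, ← Finset.mul_sum, Finset.sum_comm]
          ring
      _ = ((2:ℝ)^N)⁻¹ * ∑ S : Finset (Fin N), hcEps S p * hcEps S x * (hcLam N S)^(K+1) := by
          refine congrArg _ (Finset.sum_congr rfl fun S _ => ?_)
          have h1 : ∑ i : Fin (N+1), hcEps S p * hcEps S (hcOut N i x) * (hcLam N S)^K
              = (((N:ℝ)+1-2*S.card) * hcEps S x) * (hcEps S p * (hcLam N S)^K) := by
            rw [← sum_eps_out N S x, Finset.sum_mul]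
            exact Finset.sum_congr rfl fun i _ => by ring
          rw [h1, pow_succ,
            show hcLam N S = ((N:ℝ)+1-2*(S.card:ℝ)) * ((N:ℝ)+1)⁻¹ from by
              rw [hcLam, div_eq_mul_inv]]
          ring

lemma max_sub_eq (a b : ℝ≥0∞) (ha : a ≠ ⊤) (hb : b ≠ ⊤) :
    max (a - b) (b - a) = ENNReal.ofReal |a.toReal - b.toReal| := by
  rcases le_total a b with h | h
  · rw [tsub_eq_zero_of_le h, max_eq_right (zero_le),
      abs_of_nonpos (by linarith [(ENNReal.toReal_le_toReal ha hb).2 h]), neg_sub,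
      ENNReal.ofReal_sub _ ENNReal.toReal_nonneg, ENNReal.ofReal_toReal ha,
      ENNReal.ofReal_toReal hb]
  · rw [tsub_eq_zero_of_le h, max_eq_left (zero_le),
      abs_of_nonneg (by linarith [(ENNReal.toReal_le_toReal hb ha).2 h]),
      ENNReal.ofReal_sub _ ENNReal.toReal_nonneg, ENNReal.ofReal_toReal ha,
      ENNReal.ofReal_toReal hb]

lemma tvDist_eq {X : Type*} [Fintype X] (μ ν : PMF X) :
    tvDist μ ν = ENNReal.ofReal ((1/2) * ∑ x : X, |(μ x).toReal - (ν x).toReal|) := by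
  rw [tvDist, tsum_fintype]
  rw [Finset.sum_congr rfl (fun x _ => max_sub_eq (μ x) (ν x) (PMF.apply_ne_top _ _) (PMF.apply_ne_top _ _))]
  rw [← ENNReal.ofReal_sum_of_nonneg (fun x _ => abs_nonneg _)]
  rw [ENNReal.ofReal_mul (by norm_num : (0:ℝ) ≤ 1/2)]
  congr 1
  rw [ENNReal.ofReal_div_of_pos (by norm_num), ENNReal.ofReal_one]
  norm_num

lemma tvDist_le_one {X : Type*} (μ ν : PMF X) : tvDist μ ν ≤ 1 := by
  have h : ∀ x, max (μ x - ν x) (ν x - μ x) ≤ μ x + ν x := by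
    intro x
    apply max_le
    · exact le_trans (tsub_le_self) (le_add_right le_rfl)
    · exact le_trans (tsub_le_self) (le_add_left le_rfl)
  calc tvDist μ ν ≤ (1/2) * ∑' x, (μ x + ν x) := by
        rw [tvDist]
        exact mul_le_mul_right (ENNReal.tsum_le_tsum h) _
    _ = (1/2) * (1 + 1) := by rw [ENNReal.tsum_add, PMF.tsum_coe, PMF.tsum_coe]
    _ = 1 := by
        rw [one_add_one_eq_two, ENNReal.div_mul_cancel (by norm_num) (by norm_num)]

noncomputable def hcR (N : ℕ) : ℝ := Real.exp (-(((N:ℝ)-1)/((N:ℝ)+1)) * Real.log N)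

lemma hcR_nonneg (N : ℕ) : 0 ≤ hcR N := (Real.exp_pos _).le

lemma choose_le_pow_min (N k : ℕ) (hN : 1 ≤ N) (hk2 : k ≤ N) :
    N.choose k ≤ N ^ (min k (N+1-k)) := by
  rcases le_total k (N+1-k) with h | h
  · rw [min_eq_left h]; exact Nat.choose_le_pow N k
  · rw [min_eq_right h, ← Nat.choose_symm hk2]
    calc N.choose (N-k) ≤ N^(N-k) := Nat.choose_le_pow N (N-k)
      _ ≤ N^(N+1-k) := Nat.pow_le_pow_right hN (by omega)

lemma key_est (N K k : ℕ) (hN : 2 ≤ N) (hK : (N:ℝ) * Real.log N ≤ K)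
    (hk1 : 1 ≤ k) (hk2 : k ≤ N) :
    (N.choose k : ℝ) * |((N:ℝ)+1-2*k)/((N:ℝ)+1)|^K ≤ hcR N ^ k + hcR N ^ (N+1-k) := by
  set m : ℕ := min k (N+1-k) with hm
  have hm1 : 1 ≤ m := le_min hk1 (by omega)
  have hm2 : 2*m ≤ N+1 := by omega
  have hNpos : (0:ℝ) < (N:ℝ)+1 := by positivity
  have hNR : (2:ℝ) ≤ (N:ℝ) := by exact_mod_cast hN
  have habs : |((N:ℝ)+1-2*k)/((N:ℝ)+1)| = ((N:ℝ)+1-2*(m:ℝ))/((N:ℝ)+1) := by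
    rw [abs_div, abs_of_pos hNpos]
    congr 1
    rcases le_or_gt (2*k) (N+1) with h | h
    · have hmk : m = k := by omega
      rw [hmk]
      have h2k : (2*(k:ℝ)) ≤ (N:ℝ)+1 := by exact_mod_cast h
      rw [abs_of_nonneg (by linarith)]
    · have hmk : m = N+1-k := by omega
      rw [hmk]
      have hcast : ((N+1-k : ℕ):ℝ) = (N:ℝ)+1-(k:ℝ) := by
        rw [Nat.cast_sub (by omega : k ≤ N+1)]; push_cast; ring
      have h2k : (N:ℝ)+2 ≤ 2*(k:ℝ) := by exact_mod_cast h
      rw [hcast, abs_of_nonpos (by linarith)]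
      ring
  have hbase0 : (0:ℝ) ≤ ((N:ℝ)+1-2*(m:ℝ))/((N:ℝ)+1) := by
    apply div_nonneg _ hNpos.le
    have : (2*(m:ℝ)) ≤ (N:ℝ)+1 := by exact_mod_cast hm2
    linarith
  have hbase : ((N:ℝ)+1-2*(m:ℝ))/((N:ℝ)+1) ≤ Real.exp (-(2*(m:ℝ)/((N:ℝ)+1))) := by
    have h1 := Real.add_one_le_exp (-(2*(m:ℝ)/((N:ℝ)+1)))
    have heq : ((N:ℝ)+1-2*(m:ℝ))/((N:ℝ)+1) = -(2*(m:ℝ)/((N:ℝ)+1)) + 1 := by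
      field_simp
      ring
    rw [heq]; exact h1
  have hpow : |((N:ℝ)+1-2*k)/((N:ℝ)+1)|^K ≤ Real.exp (-(2*(m:ℝ)*K/((N:ℝ)+1))) := by
    rw [habs]
    calc (((N:ℝ)+1-2*(m:ℝ))/((N:ℝ)+1))^K ≤ Real.exp (-(2*(m:ℝ)/((N:ℝ)+1)))^K :=
          pow_le_pow_left₀ hbase0 hbase K
      _ = Real.exp (-(2*(m:ℝ)*K/((N:ℝ)+1))) := by
          rw [← Real.exp_nat_mul]; congr 1; ring
  have hlogN : 0 ≤ Real.log N := Real.log_nonneg (by linarith)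
  have hKmono : Real.exp (-(2*(m:ℝ)*K/((N:ℝ)+1)))
      ≤ Real.exp (-(2*(m:ℝ)*((N:ℝ)*Real.log N)/((N:ℝ)+1))) := by
    apply Real.exp_le_exp.2
    apply neg_le_neg
    gcongr
  have hchoose : (N.choose k:ℝ) ≤ ((N:ℝ))^m := by
    exact_mod_cast choose_le_pow_min N k (by omega) hk2
  have hNpow : ((N:ℝ))^m = Real.exp ((m:ℝ) * Real.log N) := by
    have h := Real.exp_nat_mul (Real.log N) m
    rw [Real.exp_log (by linarith : (0:ℝ) < (N:ℝ))] at h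
    exact h.symm
  calc (N.choose k : ℝ) * |((N:ℝ)+1-2*k)/((N:ℝ)+1)|^K
      ≤ (N:ℝ)^m * Real.exp (-(2*(m:ℝ)*((N:ℝ)*Real.log N)/((N:ℝ)+1))) := by
        apply mul_le_mul hchoose (le_trans hpow hKmono) (by positivity) (by positivity)
    _ = Real.exp ((m:ℝ) * Real.log N + -(2*(m:ℝ)*((N:ℝ)*Real.log N)/((N:ℝ)+1))) := by
        rw [hNpow, ← Real.exp_add]
    _ = hcR N ^ m := by
        rw [hcR, ← Real.exp_nat_mul]
        congr 1
        field_simp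
        ring
    _ ≤ hcR N ^ k + hcR N ^ (N+1-k) := by
        rcases le_total k (N+1-k) with h | h
        · rw [show m = k from by omega]
          exact le_add_of_nonneg_right (pow_nonneg (hcR_nonneg N) _)
        · rw [show m = N+1-k from by omega]
          exact le_add_of_nonneg_left (pow_nonneg (hcR_nonneg N) _)

lemma hcR_le (N : ℕ) (hN : 4 ≤ N) : hcR N ≤ 2/(N:ℝ) := by
  have hNR : (4:ℝ) ≤ (N:ℝ) := by exact_mod_cast hN
  have hlog2 := Real.log_two_gt_d9
  have hlog2' := Real.log_two_lt_d9
  have h8 : Real.log ((N:ℝ)/8) ≤ (N:ℝ)/8 - 1 := Real.log_le_sub_one_of_pos (by linarith)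
  have hlogdiv : Real.log ((N:ℝ)/8) = Real.log N - 3*Real.log 2 := by
    rw [Real.log_div (by linarith) (by norm_num), show (8:ℝ) = 2^3 by norm_num,
      Real.log_pow]
    push_cast; ring
  have hlogN : Real.log N ≤ (N:ℝ)/8 - 1 + 3*Real.log 2 := by
    rw [hlogdiv] at h8; linarith
  have hkey : 2 * Real.log N ≤ ((N:ℝ)+1) * Real.log 2 := by
    nlinarith [mul_nonneg (by linarith : (0:ℝ) ≤ (N:ℝ)-4)
      (by linarith : (0:ℝ) ≤ Real.log 2 - 1/4)]
  have h2N : (0:ℝ) < 2/(N:ℝ) := by positivity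
  rw [hcR, ← Real.exp_log h2N]
  apply Real.exp_le_exp.2
  rw [Real.log_div (by norm_num) (by linarith)]
  have h1 : -(((N:ℝ)-1)/((N:ℝ)+1)) * Real.log N
      = Real.log 2 - Real.log N - (Real.log 2 - 2*Real.log N/((N:ℝ)+1)) := by
    field_simp
    ring
  rw [h1]
  have h2 : 2*Real.log N/((N:ℝ)+1) ≤ Real.log 2 := by
    rw [div_le_iff₀ (by linarith)]
    nlinarith [hkey]
  linarith

noncomputable def hcF (N K j : ℕ) : ℝ := |((N:ℝ)+1-2*(j:ℝ))/((N:ℝ)+1)|^K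

lemma hcDev (N : ℕ) (p x : Fin N → Bool) (K : ℕ) :
    |((hcWalk N p K) x).toReal - ((2:ℝ)^N)⁻¹|
      ≤ ((2:ℝ)^N)⁻¹ * ∑ S ∈ Finset.univ.erase (∅ : Finset (Fin N)), |hcLam N S|^K := by
  rw [hcWalk_toReal]
  have hsplit : ∑ S : Finset (Fin N), hcEps S p * hcEps S x * (hcLam N S)^K
      = 1 + ∑ S ∈ Finset.univ.erase ∅, hcEps S p * hcEps S x * (hcLam N S)^K := by
    rw [← Finset.add_sum_erase Finset.univ _ (Finset.mem_univ ∅)]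
    congr 1
    rw [hcEps, hcEps, hcLam]
    simp [div_self (show ((N:ℝ)+1) ≠ 0 by positivity)]
  rw [hsplit, mul_add, mul_one, add_sub_cancel_left]
  calc |((2:ℝ)^N)⁻¹ * ∑ S ∈ Finset.univ.erase ∅, hcEps S p * hcEps S x * (hcLam N S)^K|
      = ((2:ℝ)^N)⁻¹ * |∑ S ∈ Finset.univ.erase ∅, hcEps S p * hcEps S x * (hcLam N S)^K| := by
        rw [abs_mul, abs_of_nonneg (by positivity)]
    _ ≤ ((2:ℝ)^N)⁻¹ * ∑ S ∈ Finset.univ.erase ∅, |hcEps S p * hcEps S x * (hcLam N S)^K| :=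
        mul_le_mul_of_nonneg_left (Finset.abs_sum_le_sum_abs _ _) (by positivity)
    _ ≤ ((2:ℝ)^N)⁻¹ * ∑ S ∈ Finset.univ.erase (∅ : Finset (Fin N)), |hcLam N S|^K := by
        apply mul_le_mul_of_nonneg_left _ (by positivity)
        apply Finset.sum_le_sum
        intro S _
        rw [abs_mul, abs_mul, hcEps_abs, hcEps_abs, abs_pow]
        norm_num

lemma hcB_eq (N K : ℕ) :
    ∑ S ∈ Finset.univ.erase (∅ : Finset (Fin N)), |hcLam N S|^K
      = ∑ i ∈ Finset.range N, (N.choose (i+1) : ℝ) * hcF N K (i+1) := by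
  classical
  have hFS : ∀ S : Finset (Fin N), |hcLam N S|^K = hcF N K S.card := fun S => rfl
  have htot : ∑ S : Finset (Fin N), hcF N K S.card
      = ∑ j ∈ Finset.range (N+1), (N.choose j : ℝ) * hcF N K j := by
    rw [← Finset.powerset_univ, Finset.sum_powerset, Finset.card_univ, Fintype.card_fin]
    refine Finset.sum_congr rfl fun j hj => ?_
    have hc : ∀ S ∈ Finset.powersetCard j (Finset.univ : Finset (Fin N)),
        hcF N K S.card = hcF N K j :=
      fun S hS => by rw [(Finset.mem_powersetCard.1 hS).2]
    rw [Finset.sum_congr rfl hc, Finset.sum_const, Finset.card_powersetCard,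
      Finset.card_univ, Fintype.card_fin, nsmul_eq_mul]
  have herase : ∑ S ∈ Finset.univ.erase (∅:Finset (Fin N)), hcF N K S.card
      = (∑ S : Finset (Fin N), hcF N K S.card) - hcF N K 0 := by
    have h := Finset.add_sum_erase Finset.univ (fun S : Finset (Fin N) => hcF N K S.card)
      (Finset.mem_univ ∅)
    simp only [Finset.card_empty] at h
    linarith [h]
  rw [Finset.sum_congr rfl (fun S _ => hFS S), herase, htot, Finset.sum_range_succ']
  rw [Nat.choose_zero_right]
  push_cast
  ring

lemma hcB_le (N K : ℕ) (hN : 4 ≤ N) (hK : (N:ℝ) * Real.log N ≤ K) :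
    ∑ i ∈ Finset.range N, (N.choose (i+1) : ℝ) * hcF N K (i+1) ≤ 8/(N:ℝ) := by
  have hNR : (4:ℝ) ≤ (N:ℝ) := by exact_mod_cast hN
  have hr2 : hcR N ≤ 2/(N:ℝ) := hcR_le N hN
  have hrhalf : hcR N ≤ 1/2 := by
    refine le_trans hr2 ?_
    rw [div_le_div_iff₀ (by linarith) (by norm_num)]
    linarith
  have h1 : ∀ i ∈ Finset.range N, (N.choose (i+1):ℝ) * hcF N K (i+1)
      ≤ hcR N ^ (i+1) + hcR N ^ (N-i) := by
    intro i hi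
    have hi' : i < N := Finset.mem_range.1 hi
    have := key_est N K (i+1) (by omega) hK (by omega) (by omega)
    rwa [show N+1-(i+1) = N-i from by omega] at this
  have hgeo : ∑ i ∈ Finset.range N, hcR N ^ (i+1) ≤ 2 * hcR N := by
    calc ∑ i ∈ Finset.range N, hcR N ^ (i+1)
        = hcR N * ∑ i ∈ Finset.range N, hcR N ^ i := by
          rw [Finset.mul_sum]
          exact Finset.sum_congr rfl fun i _ => by rw [pow_succ']
      _ ≤ hcR N * ∑ i ∈ Finset.range N, (1/2:ℝ) ^ i := by
          apply mul_le_mul_of_nonneg_left _ (hcR_nonneg N)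
          exact Finset.sum_le_sum fun i _ => pow_le_pow_left₀ (hcR_nonneg N) hrhalf i
      _ ≤ hcR N * 2 := mul_le_mul_of_nonneg_left (sum_geometric_two_le N) (hcR_nonneg N)
      _ = 2 * hcR N := by ring
  have hrefl : ∑ i ∈ Finset.range N, hcR N ^ (N-i) = ∑ i ∈ Finset.range N, hcR N ^ (i+1) := by
    rw [← Finset.sum_range_reflect (fun i => hcR N ^ (i+1)) N]
    refine Finset.sum_congr rfl fun i hi => ?_
    have hi' : i < N := Finset.mem_range.1 hi
    rw [show N-1-i+1 = N-i from by omega]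
  calc ∑ i ∈ Finset.range N, (N.choose (i+1) : ℝ) * hcF N K (i+1)
      ≤ ∑ i ∈ Finset.range N, (hcR N ^ (i+1) + hcR N ^ (N-i)) := Finset.sum_le_sum h1
    _ = (∑ i ∈ Finset.range N, hcR N ^ (i+1)) + ∑ i ∈ Finset.range N, hcR N ^ (N-i) :=
        Finset.sum_add_distrib
    _ ≤ 2 * hcR N + 2 * hcR N := by rw [hrefl]; linarith [hgeo]
    _ = 4 * hcR N := by ring
    _ ≤ 4 * (2/(N:ℝ)) := by linarith [hr2]
    _ = 8/(N:ℝ) := by ring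

/-- **Convergence of the lazy hypercube walk to the uniform distribution.** There is a constant
`C > 0` such that for all `N ≥ 2`, taking `K = ⌈N·log N⌉` steps brings the walk within TV
distance `C/N` of the uniform distribution on `{0,1}^N`, from any start position. -/
theorem hcWalk_mixes_to_uniform :
    ∃ C : ℝ, 0 < C ∧
      ∀ N : ℕ, 2 ≤ N → ∀ p : Fin N → Bool,
        tvDist (hcWalk N p ⌈(N : ℝ) * Real.log N⌉₊)
            (PMF.uniformOfFintype (Fin N → Bool))
          ≤ ENNReal.ofReal (C / N) := by
  refine ⟨4, by norm_num, fun N hN p => ?_⟩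
  have hNR : (2:ℝ) ≤ (N:ℝ) := by exact_mod_cast hN
  rcases lt_or_ge N 4 with h4 | h4
  · -- small N : TV ≤ 1 ≤ 4/N
    refine le_trans (tvDist_le_one _ _) ?_
    rw [show (1:ℝ≥0∞) = ENNReal.ofReal 1 from ENNReal.ofReal_one.symm]
    apply ENNReal.ofReal_le_ofReal
    rw [le_div_iff₀ (by linarith : (0:ℝ) < (N:ℝ))]
    have : (N:ℝ) ≤ 4 := by exact_mod_cast h4.le
    linarith
  · set K := ⌈(N : ℝ) * Real.log N⌉₊ with hKdef
    have hK : (N:ℝ) * Real.log N ≤ (K:ℝ) := Nat.le_ceil _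
    have hcard : (Fintype.card (Fin N → Bool)) = 2^N := by
      rw [Fintype.card_fun, Fintype.card_bool, Fintype.card_fin]
    have hu : ∀ x : Fin N → Bool,
        ((PMF.uniformOfFintype (Fin N → Bool)) x).toReal = ((2:ℝ)^N)⁻¹ := by
      intro x
      rw [PMF.uniformOfFintype_apply, hcard, ENNReal.toReal_inv]
      push_cast
      norm_num
    rw [tvDist_eq]
    apply ENNReal.ofReal_le_ofReal
    have hdev : ∀ x : Fin N → Bool,
        |((hcWalk N p K) x).toReal - ((PMF.uniformOfFintype (Fin N → Bool)) x).toReal|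
          ≤ ((2:ℝ)^N)⁻¹ * (8/(N:ℝ)) := by
      intro x
      rw [hu x]
      refine le_trans (hcDev N p x K) ?_
      apply mul_le_mul_of_nonneg_left _ (by positivity)
      rw [hcB_eq]
      exact hcB_le N K h4 hK
    calc (1/2) * ∑ x : Fin N → Bool,
          |((hcWalk N p K) x).toReal - ((PMF.uniformOfFintype (Fin N → Bool)) x).toReal|
        ≤ (1/2) * ∑ _x : Fin N → Bool, ((2:ℝ)^N)⁻¹ * (8/(N:ℝ)) := by
          apply mul_le_mul_of_nonneg_left _ (by norm_num)
          exact Finset.sum_le_sum fun x _ => hdev x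
      _ = (1/2) * ((2^N : ℝ) * (((2:ℝ)^N)⁻¹ * (8/(N:ℝ)))) := by
          rw [Finset.sum_const, Finset.card_univ, hcard, nsmul_eq_mul]
          push_cast
          ring
      _ = 4 / (N:ℝ) := by
          field_simp
          ring
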